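/- Let V_1, …, V_m be exchangeable real-valued random variables and let k ∈ {1, …, m}. Then P( V_m ≤ the k-th smallest value among V_1, …, V_m ) ≥ k/m. -/

import Mathlib

open MeasureTheory ProbabilityTheory
open ENNReal

/-- The `k`-th smallest value (`1`-indexed order statistic, counted with multiplicity)
of a finite family of reals. -/
noncomputable def orderStat {m : ℕ} (k : ℕ) (v : Fin m → ℝ) : ℝ :=
  (((Finset.univ : Finset (Fin m)).val.map v).sort (· ≤ ·)).getD (k - 1) 0

-- multiset invariance under precomposition with a perm
lemma multiset_map_comp_perm {m : ℕ} (v : Fin m → ℝ) (σ : Equiv.Perm (Fin m)) :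
    (Finset.univ : Finset (Fin m)).val.map (v ∘ σ) = (Finset.univ : Finset (Fin m)).val.map v := by
  have h : (Finset.univ : Finset (Fin m)).val.map (σ : Fin m → Fin m) =
      (Finset.univ : Finset (Fin m)).val := by
    have := Finset.map_univ_equiv σ
    calc (Finset.univ : Finset (Fin m)).val.map (σ : Fin m → Fin m)
        = ((Finset.univ : Finset (Fin m)).map σ.toEmbedding).val := rfl
      _ = (Finset.univ : Finset (Fin m)).val := by rw [this]
  calc (Finset.univ : Finset (Fin m)).val.map (v ∘ σ)
      = ((Finset.univ : Finset (Fin m)).val.map (σ : Fin m → Fin m)).map v := by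
        rw [Multiset.map_map]
    _ = (Finset.univ : Finset (Fin m)).val.map v := by rw [h]

lemma orderStat_comp_perm {m k : ℕ} (v : Fin m → ℝ) (σ : Equiv.Perm (Fin m)) :
    orderStat k (v ∘ σ) = orderStat k v := by
  unfold orderStat
  rw [multiset_map_comp_perm]

lemma sort_eq_ofFn {m : ℕ} (v : Fin m → ℝ) :
    ((Finset.univ : Finset (Fin m)).val.map v).sort (· ≤ ·) =
      List.ofFn (v ∘ Tuple.sort v) := by
  refine List.Perm.eq_of_pairwise' (r := (· ≤ ·)) ?_ ?_ ?_
  rotate_right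
  · rw [← Multiset.coe_eq_coe, Multiset.sort_eq, ← multiset_map_comp_perm v (Tuple.sort v),
      Fin.univ_val_map]
  · exact Multiset.pairwise_sort _ _
  · exact (List.sortedLE_ofFn_iff.2 (Tuple.monotone_sort v)).pairwise

lemma orderStat_eq_sorted {m k : ℕ} (hk1 : 1 ≤ k) (hkm : k ≤ m) (v : Fin m → ℝ) :
    orderStat k v = (v ∘ Tuple.sort v) ⟨k - 1, by omega⟩ := by
  unfold orderStat
  rw [sort_eq_ofFn]
  rw [List.getD_eq_getElem _ _ (by simp; omega)]
  simp


lemma card_le_orderStat {m k : ℕ} (hk1 : 1 ≤ k) (hkm : k ≤ m) (v : Fin m → ℝ) :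
    k ≤ (Finset.univ.filter fun i => v i ≤ orderStat k v).card := by
  classical
  set σ := Tuple.sort v with hσ
  set a : Fin m := ⟨k - 1, by omega⟩ with ha
  have hmono := Tuple.monotone_sort v
  have hsub : (Finset.Iic a).image σ ⊆ Finset.univ.filter fun i => v i ≤ orderStat k v := by
    intro j hj
    simp only [Finset.mem_image, Finset.mem_Iic] at hj
    obtain ⟨j', hj', rfl⟩ := hj
    simp only [Finset.mem_filter, Finset.mem_univ, true_and]
    rw [orderStat_eq_sorted hk1 hkm]
    exact hmono hj'
  calc k = (Finset.Iic a).card := by rw [Fin.card_Iic]; simp [ha]; omega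
    _ = ((Finset.Iic a).image σ).card := (Finset.card_image_of_injective _ σ.injective).symm
    _ ≤ _ := Finset.card_le_card hsub

lemma le_orderStat_iff {m k : ℕ} (hk1 : 1 ≤ k) (hkm : k ≤ m) (v : Fin m → ℝ) (i : Fin m) :
    v i ≤ orderStat k v ↔ (Finset.univ.filter fun j => v j < v i).card < k := by
  classical
  set σ := Tuple.sort v with hσ
  set a : Fin m := ⟨k - 1, by omega⟩ with ha
  have hmono := Tuple.monotone_sort v
  rw [orderStat_eq_sorted hk1 hkm]
  constructor
  · intro h
    have hsub : (Finset.univ.filter fun j => v j < v i) ⊆ (Finset.Iio a).image σ := by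
      intro j hj
      simp only [Finset.mem_filter, Finset.mem_univ, true_and] at hj
      simp only [Finset.mem_image, Finset.mem_Iio]
      refine ⟨σ.symm j, ?_, σ.apply_symm_apply j⟩
      by_contra hc
      push_neg at hc
      have : (v ∘ σ) a ≤ (v ∘ σ) (σ.symm j) := hmono hc
      simp only [Function.comp_apply, σ.apply_symm_apply] at this
      exact absurd (lt_of_lt_of_le hj h) (not_lt.2 this)
    calc (Finset.univ.filter fun j => v j < v i).card
        ≤ ((Finset.Iio a).image σ).card := Finset.card_le_card hsub
      _ ≤ (Finset.Iio a).card := Finset.card_image_le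
      _ = k - 1 := by rw [Fin.card_Iio]
      _ < k := by omega
  · intro h
    by_contra hc
    push_neg at hc
    have hsub : (Finset.Iic a).image σ ⊆ Finset.univ.filter fun j => v j < v i := by
      intro j hj
      simp only [Finset.mem_image, Finset.mem_Iic] at hj
      obtain ⟨j', hj', rfl⟩ := hj
      simp only [Finset.mem_filter, Finset.mem_univ, true_and]
      exact lt_of_le_of_lt (hmono hj') hc
    have : k ≤ (Finset.univ.filter fun j => v j < v i).card := by
      calc k = (Finset.Iic a).card := by rw [Fin.card_Iic]; simp [ha]; omega
        _ = ((Finset.Iic a).image σ).card := (Finset.card_image_of_injective _ σ.injective).symm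
        _ ≤ _ := Finset.card_le_card hsub
    omega

/-- Random variables `Z 0, …, Z (m-1)` are exchangeable if their joint distribution is
invariant under every permutation of the indices. -/
def Exchangeable {Ω α : Type*} [MeasurableSpace Ω] [MeasurableSpace α]
    (P : Measure Ω) {m : ℕ} (Z : Fin m → Ω → α) : Prop :=
  ∀ σ : Equiv.Perm (Fin m),
    Measure.map (fun ω i => Z (σ i) ω) P = Measure.map (fun ω i => Z i ω) P

lemma measurableSet_S {m k : ℕ} (hk1 : 1 ≤ k) (hkm : k ≤ m) (i : Fin m) :
    MeasurableSet {x : Fin m → ℝ | x i ≤ orderStat k x} := by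
  classical
  have : {x : Fin m → ℝ | x i ≤ orderStat k x} =
      {x : Fin m → ℝ | (Finset.univ.filter fun j => x j < x i).card < k} := by
    ext x; exact le_orderStat_iff hk1 hkm x i
  rw [this]
  have hmeas : Measurable fun x : Fin m → ℝ =>
      (Finset.univ.filter fun j => x j < x i).card := by
    have : (fun x : Fin m → ℝ => (Finset.univ.filter fun j => x j < x i).card) =
        fun x => ∑ j, if x j < x i then 1 else 0 := by
      funext x; rw [Finset.sum_boole]; simp
    rw [this]
    exact Finset.measurable_sum _ fun j _ =>
      Measurable.ite (measurableSet_lt (measurable_pi_apply j) (measurable_pi_apply i))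
        measurable_const measurable_const
  exact hmeas (measurableSet_lt measurable_id measurable_const : MeasurableSet {n : ℕ | n < k})

/-- For exchangeable real random variables `V 1, …, V m` and `1 ≤ k ≤ m`, the last
variable is at most the `k`-th order statistic with probability at least `k/m`. -/
theorem prob_le_orderStat
    {Ω : Type*} [MeasurableSpace Ω] (P : Measure Ω) [IsProbabilityMeasure P]
    {m : ℕ} (V : Fin m → Ω → ℝ) (hVmeas : ∀ i, Measurable (V i))
    (hexch : Exchangeable P V)
    (k : ℕ) (hk1 : 1 ≤ k) (hkm : k ≤ m) :
    ENNReal.ofReal ((k : ℝ) / (m : ℝ)) ≤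
      P {ω | V ⟨m - 1, by omega⟩ ω ≤ orderStat k (fun i => V i ω)} := by
  classical
  have hm1 : 1 ≤ m := le_trans hk1 hkm
  set last : Fin m := ⟨m - 1, by omega⟩ with hlast
  set F : Ω → (Fin m → ℝ) := fun ω i => V i ω with hF
  have hFmeas : Measurable F := measurable_pi_lambda _ hVmeas
  set μ : Measure (Fin m → ℝ) := Measure.map F P with hμ
  haveI : IsProbabilityMeasure μ := Measure.isProbabilityMeasure_map hFmeas.aemeasurable
  set S : Fin m → Set (Fin m → ℝ) := fun i => {x | x i ≤ orderStat k x} with hS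
  have hSmeas : ∀ i, MeasurableSet (S i) := fun i => measurableSet_S hk1 hkm i
  -- all S i have the same measure
  have h_eq : ∀ i, μ (S i) = μ (S last) := by
    intro i
    set σ : Equiv.Perm (Fin m) := Equiv.swap last i with hσ
    have hmap : Measure.map (fun x : Fin m → ℝ => fun j => x (σ j)) μ = μ := by
      rw [hμ, Measure.map_map (measurable_pi_lambda _ fun j => measurable_pi_apply (σ j)) hFmeas]
      exact hexch σ
    have hg : Measurable fun x : Fin m → ℝ => fun j => x (σ j) :=
      measurable_pi_lambda _ fun j => measurable_pi_apply (σ j)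
    have : μ (S last) = μ ((fun x : Fin m → ℝ => fun j => x (σ j)) ⁻¹' S last) := by
      conv_lhs => rw [← hmap]
      rw [Measure.map_apply hg (hSmeas last)]
    rw [this]
    congr 1
    ext x
    simp only [S, Set.mem_preimage, Set.mem_setOf_eq]
    have h1 : (fun j => x (σ j)) = x ∘ σ := rfl
    rw [h1, orderStat_comp_perm]
    rw [show σ last = i from Equiv.swap_apply_left last i]
  -- sum of measures is at least k
  have hsum : (k : ℝ≥0∞) ≤ ∑ i, μ (S i) := by
    have hpt : ∀ x, (k : ℝ≥0∞) ≤ ∑ i, (S i).indicator (fun _ => (1 : ℝ≥0∞)) x := by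
      intro x
      have hcard := card_le_orderStat hk1 hkm x
      have : ∑ i, (S i).indicator (fun _ => (1 : ℝ≥0∞)) x =
          ((Finset.univ.filter fun i => x i ≤ orderStat k x).card : ℝ≥0∞) := by
        rw [← Finset.sum_boole]
        refine Finset.sum_congr rfl fun i _ => ?_
        by_cases h : x i ≤ orderStat k x <;> simp [Set.indicator, S, h]
      rw [this]
      exact_mod_cast hcard
    calc (k : ℝ≥0∞) = ∫⁻ _, (k : ℝ≥0∞) ∂μ := by simp
      _ ≤ ∫⁻ x, ∑ i, (S i).indicator (fun _ => (1 : ℝ≥0∞)) x ∂μ :=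
          lintegral_mono fun x => hpt x
      _ = ∑ i, ∫⁻ x, (S i).indicator (fun _ => (1 : ℝ≥0∞)) x ∂μ :=
          lintegral_finset_sum _ fun i _ => measurable_const.indicator (hSmeas i)
      _ = ∑ i, μ (S i) := by
          refine Finset.sum_congr rfl fun i _ => ?_
          exact lintegral_indicator_one (hSmeas i)
  have hsum' : (k : ℝ≥0∞) ≤ (m : ℝ≥0∞) * μ (S last) := by
    calc (k : ℝ≥0∞) ≤ ∑ i, μ (S i) := hsum
      _ = ∑ _i : Fin m, μ (S last) := Finset.sum_congr rfl fun i _ => h_eq i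
      _ = (m : ℝ≥0∞) * μ (S last) := by rw [Finset.sum_const, Finset.card_univ,
          Fintype.card_fin, nsmul_eq_mul]
  have hP : P {ω | V last ω ≤ orderStat k (fun i => V i ω)} = μ (S last) := by
    rw [hμ, Measure.map_apply hFmeas (hSmeas last)]
    rfl
  rw [hP]
  have hmne : (m : ℝ≥0∞) ≠ 0 := by
    simp only [ne_eq, Nat.cast_eq_zero]; omega
  have hmtop : (m : ℝ≥0∞) ≠ ⊤ := ENNReal.natCast_ne_top m
  have hofReal : ENNReal.ofReal ((k : ℝ) / (m : ℝ)) = (k : ℝ≥0∞) / (m : ℝ≥0∞) := by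
    rw [ENNReal.ofReal_div_of_pos (by exact_mod_cast Nat.pos_of_ne_zero (by omega)), ENNReal.ofReal_natCast,
      ENNReal.ofReal_natCast]
  rw [hofReal]
  rw [ENNReal.div_le_iff hmne hmtop]
  rw [mul_comm]
  exact hsum'
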